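/- For p₁ > 0 and x₀ ∈ ℝ, the functions u(x) = √(1 + e^{2(x-x₀)})/p₁, ρ(x) = 1/(p₁ √(1 + e^{2(x-x₀)})) satisfy the stationary 2-CH system with κ = 0: u m_x + 2 m u_x - ρ ρ_x = 0 and (ρ u)_x = 0, where m = u - u_xx. -/

import Mathlib

/-- the stationary peakon profile.  For `p₁ > 0`, `x₀ ∈ ℝ`, the functions
`u(x) = √(1 + e^{2(x-x₀)})/p₁` and `ρ(x) = 1/(p₁ √(1 + e^{2(x-x₀)}))` satisfy the
stationary 2-CH system with `κ = 0`: `u m' + 2 m u' - ρ ρ' = 0` and `(ρ u)' = 0`,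
where `m = u - u''`. -/
theorem stationary_peakon
    (p₁ x₀ : ℝ) (hp₁ : 0 < p₁)
    (u ρ m : ℝ → ℝ)
    (hu : ∀ x, u x = Real.sqrt (1 + Real.exp (2 * (x - x₀))) / p₁)
    (hρ : ∀ x, ρ x = 1 / (p₁ * Real.sqrt (1 + Real.exp (2 * (x - x₀)))))
    (hm : ∀ x, m x = u x - deriv (deriv u) x) :
    (∀ x, u x * deriv m x + 2 * m x * deriv u x - ρ x * deriv ρ x = 0) ∧
    (∀ x, deriv (fun x => ρ x * u x) x = 0) := by
  set E : ℝ → ℝ := fun x => Real.exp (2 * (x - x₀)) with hEdef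
  set s : ℝ → ℝ := fun x => Real.sqrt (1 + E x) with hsdef
  have hEpos : ∀ x, 0 < E x := fun x => Real.exp_pos _
  have hspos : ∀ x, 0 < s x := fun x => Real.sqrt_pos.mpr (by positivity)
  have hsne : ∀ x, s x ≠ 0 := fun x => (hspos x).ne'
  have hsq : ∀ x, s x ^ 2 = 1 + E x := fun x => Real.sq_sqrt (by positivity)
  have hE : ∀ x, HasDerivAt E (2 * E x) x := by
    intro x
    have h1 : HasDerivAt (fun x : ℝ => 2 * (x - x₀)) 2 x := by
      simpa using ((hasDerivAt_id x).sub_const x₀).const_mul 2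
    simpa [hEdef, mul_comm] using h1.exp
  have hs : ∀ x, HasDerivAt s (E x / s x) x := by
    intro x
    have h1 : HasDerivAt (fun x => 1 + E x) (2 * E x) x := (hE x).const_add 1
    have h2 := (Real.hasDerivAt_sqrt (show (1 : ℝ) + E x ≠ 0 by positivity)).comp x h1
    refine HasDerivAt.congr_deriv h2 ?_
    have h5 := hsne x
    simp only [hsdef] at h5 ⊢
    field_simp
  have hu' : ∀ x, HasDerivAt u (E x / (s x * p₁)) x := by
    intro x
    have hfun : u = fun x => s x / p₁ := funext hu
    rw [hfun]
    simpa [div_div] using (hs x).div_const p₁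
  have hderivu : deriv u = fun x => E x / (s x * p₁) := funext fun x => (hu' x).deriv
  have hu'' : ∀ x, deriv (deriv u) x = E x * (2 + E x) / (s x ^ 3 * p₁) := by
    intro x
    rw [hderivu]
    have hden : HasDerivAt (fun x => s x * p₁) (E x / s x * p₁) x := (hs x).mul_const p₁
    have hdenne : s x * p₁ ≠ 0 := by positivity
    have h := (hE x).div hden hdenne
    rw [show (fun x => E x / (s x * p₁)) = E / fun x => s x * p₁ from rfl, h.deriv]
    have h4 : s x ^ 4 = (1 + E x) ^ 2 := by
      rw [show (4 : ℕ) = 2 * 2 from rfl, pow_mul, hsq]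
    have h5 := hsne x
    field_simp
    linear_combination (2 * E x) * hsq x
  have hmfun : m = fun x => 1 / (s x ^ 3 * p₁) := by
    funext x
    rw [hm, hu x, hu'' x]
    have h4 : s x ^ 4 = (1 + E x) ^ 2 := by
      rw [show (4 : ℕ) = 2 * 2 from rfl, pow_mul, hsq]
    have hq := hsq x
    have h5 := hsne x
    field_simp
    simp only [hEdef, hsdef] at hq h4 ⊢
    linear_combination h4
  have hm' : ∀ x, deriv m x = -(3 * s x ^ 2 * (E x / s x) * p₁) / (s x ^ 3 * p₁) ^ 2 := by
    intro x
    rw [hmfun]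
    have h1 : HasDerivAt (fun x => s x ^ 3 * p₁) (3 * s x ^ 2 * (E x / s x) * p₁) x := by
      simpa [mul_comm, mul_assoc, mul_left_comm] using ((hs x).pow 3).mul_const p₁
    have h2 := h1.inv (by positivity)
    simp only [one_div]
    rw [show (fun x => (s x ^ 3 * p₁)⁻¹) = (fun x => s x ^ 3 * p₁)⁻¹ from rfl, h2.deriv]
  have hρ' : ∀ x, deriv ρ x = -(E x / s x * p₁) / (p₁ * s x) ^ 2 := by
    intro x
    have hfun : ρ = fun x => (p₁ * s x)⁻¹ := by
      funext y; rw [hρ y, one_div]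
    rw [hfun]
    have h1 : HasDerivAt (fun x => p₁ * s x) (E x / s x * p₁) x := by
      simpa [mul_comm] using (hs x).const_mul p₁
    exact (h1.inv (by positivity)).deriv
  constructor
  · intro x
    rw [hm' x, hρ' x, hρ x, hu x, hderivu]
    simp only [hmfun]
    have h4 : s x ^ 4 = (1 + E x) ^ 2 := by
      rw [show (4 : ℕ) = 2 * 2 from rfl, pow_mul, hsq]
    field_simp
    ring
  · intro x
    have hfun : (fun x => ρ x * u x) = fun _ : ℝ => 1 / p₁ ^ 2 := by
      funext y
      rw [hρ y, hu y]
      field_simp [hsne y]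
    rw [hfun]
    simp
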